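/- arXiv:2605.25490 — 4 statements merged into one kernel-verified Lean document; each statement's English description precedes it below -/
import Mathlib

section
/- Let f : ℝⁿ → ℝ be convex with minimizer x*, and let (x_k) be generated by x_{k+1} = x_k − h_k g_k where g_k ∈ ∂f(x_k) and h_k > 0. Then for every k, min_{0 ≤ ℓ ≤ k} f(x_ℓ) − f(x*) ≤ (‖x_0 − x*‖² + Σ_{ℓ=0}^{k} h_ℓ² ‖g_ℓ‖²) / (2 Σ_{ℓ=0}^{k} h_ℓ). -/
open Finset

theorem subgradient_method_basic_bound {n : ℕ}
    (f : EuclideanSpace ℝ (Fin n) → ℝ) (hf : ConvexOn ℝ Set.univ f)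
    (xstar : EuclideanSpace ℝ (Fin n)) (hmin : ∀ w, f xstar ≤ f w)
    (x g : ℕ → EuclideanSpace ℝ (Fin n)) (h : ℕ → ℝ)
    (hh : ∀ k, 0 < h k)
    (hgk : ∀ k w, f w ≥ f (x k) + (inner ℝ (g k) (w - x k) : ℝ))
    (hrec : ∀ k, x (k + 1) = x k - h k • g k) (k : ℕ) :
    (Finset.range (k + 1)).inf' (by simp) (fun ℓ => f (x ℓ)) - f xstar ≤
      (‖x 0 - xstar‖ ^ 2 + ∑ ℓ ∈ Finset.range (k + 1), (h ℓ) ^ 2 * ‖g ℓ‖ ^ 2) /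
        (2 * ∑ ℓ ∈ Finset.range (k + 1), h ℓ) := by
  set m := (Finset.range (k + 1)).inf' (by simp) (fun ℓ => f (x ℓ)) with hm
  -- per-step inequality
  have step : ∀ ℓ, ‖x (ℓ + 1) - xstar‖ ^ 2 ≤
      ‖x ℓ - xstar‖ ^ 2 - 2 * h ℓ * (f (x ℓ) - f xstar) + h ℓ ^ 2 * ‖g ℓ‖ ^ 2 := by
    intro ℓ
    have hx : x (ℓ + 1) - xstar = (x ℓ - xstar) - h ℓ • g ℓ := by
      rw [hrec ℓ]; abel
    have hexp : ‖x (ℓ + 1) - xstar‖ ^ 2 =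
        ‖x ℓ - xstar‖ ^ 2 - 2 * (h ℓ * inner ℝ (g ℓ) (x ℓ - xstar)) + h ℓ ^ 2 * ‖g ℓ‖ ^ 2 := by
      rw [hx, norm_sub_sq_real, norm_smul, real_inner_smul_right, real_inner_comm]
      simp [abs_of_pos (hh ℓ), mul_pow]
    have hsub : f (x ℓ) - f xstar ≤ inner ℝ (g ℓ) (x ℓ - xstar) := by
      have := hgk ℓ xstar
      have h2 : (inner ℝ (g ℓ) (xstar - x ℓ) : ℝ) = - inner ℝ (g ℓ) (x ℓ - xstar) := by
        rw [← inner_neg_right]; congr 1; abel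
      rw [h2] at this
      linarith
    have := mul_le_mul_of_nonneg_left hsub (by linarith [hh ℓ] : (0:ℝ) ≤ 2 * h ℓ)
    rw [hexp]; nlinarith
  -- summed inequality
  have sum_ineq : ∀ j, ‖x (j + 1) - xstar‖ ^ 2 ≤
      ‖x 0 - xstar‖ ^ 2 - ∑ ℓ ∈ Finset.range (j + 1), 2 * h ℓ * (f (x ℓ) - f xstar)
        + ∑ ℓ ∈ Finset.range (j + 1), h ℓ ^ 2 * ‖g ℓ‖ ^ 2 := by
    intro j
    induction j with
    | zero => simpa using step 0
    | succ j ih =>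
      have := step (j + 1)
      rw [Finset.sum_range_succ, Finset.sum_range_succ (f := fun ℓ => h ℓ ^ 2 * ‖g ℓ‖ ^ 2)]
      linarith
  have hmle : ∀ ℓ ∈ Finset.range (k + 1), m ≤ f (x ℓ) := fun ℓ hℓ =>
    Finset.inf'_le _ hℓ
  have hsum_lb : (∑ ℓ ∈ Finset.range (k + 1), 2 * h ℓ) * (m - f xstar) ≤
      ∑ ℓ ∈ Finset.range (k + 1), 2 * h ℓ * (f (x ℓ) - f xstar) := by
    rw [Finset.sum_mul]
    apply Finset.sum_le_sum
    intro ℓ hℓ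
    have := hmle ℓ hℓ
    nlinarith [hh ℓ]
  have hS : 0 < ∑ ℓ ∈ Finset.range (k + 1), h ℓ :=
    Finset.sum_pos (fun ℓ _ => hh ℓ) (by simp)
  have hnorm : (0:ℝ) ≤ ‖x (k + 1) - xstar‖ ^ 2 := by positivity
  have key := sum_ineq k
  have h2S : (∑ ℓ ∈ Finset.range (k + 1), 2 * h ℓ) = 2 * ∑ ℓ ∈ Finset.range (k + 1), h ℓ := by
    rw [Finset.mul_sum]
  rw [h2S] at hsum_lb
  rw [le_div_iff₀ (by positivity)]
  nlinarith [hsum_lb, key, hnorm]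
end

section
/- Let f : ℝⁿ → ℝ be convex with a minimizer x*, and let (x_k) be generated by x_{k+1} = x_k − (t_k/‖g_k‖) g_k with g_k ∈ ∂f(x_k), g_k ≠ 0, and t_k > 0 satisfying Σ t_k = ∞ and Σ t_k² < ∞. Then liminf_{k→∞} f(x_k) = f(x*). -/
open Filter Topology

theorem normalized_subgradient_liminf {n : ℕ}
    (f : EuclideanSpace ℝ (Fin n) → ℝ) (hf : ConvexOn ℝ Set.univ f)
    (xstar : EuclideanSpace ℝ (Fin n)) (hmin : ∀ w, f xstar ≤ f w)
    (x g : ℕ → EuclideanSpace ℝ (Fin n)) (t : ℕ → ℝ)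
    (ht : ∀ k, 0 < t k)
    (ht1 : ¬ Summable t) (ht2 : Summable (fun k => (t k) ^ 2))
    (hgk : ∀ k w, f w ≥ f (x k) + (inner ℝ (g k) (w - x k) : ℝ))
    (hg0 : ∀ k, g k ≠ 0)
    (hrec : ∀ k, x (k + 1) = x k - (t k / ‖g k‖) • g k) :
    Filter.liminf (fun k => f (x k)) atTop = f xstar := by
  classical
  have hg : ∀ k, (0:ℝ) < ‖g k‖ := fun k => norm_pos_iff.2 (hg0 k)
  have hfx : ∀ k, f xstar ≤ f (x k) := fun k => hmin _
  -- inner product lower bound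
  have hip : ∀ k, f (x k) - f xstar ≤ (inner ℝ (g k) (x k - xstar) : ℝ) := by
    intro k
    have h := hgk k xstar
    have h2 : (inner ℝ (g k) (xstar - x k) : ℝ) = - (inner ℝ (g k) (x k - xstar) : ℝ) := by
      rw [← inner_neg_right]; congr 1; abel
    rw [h2] at h; linarith
  -- the step identity
  have hd : ∀ k, ‖x (k+1) - xstar‖^2
      = ‖x k - xstar‖^2 - 2 * (t k / ‖g k‖) * (inner ℝ (g k) (x k - xstar) : ℝ) + (t k)^2 := by
    intro k
    have hx1 : x (k+1) - xstar = (x k - xstar) - (t k / ‖g k‖) • g k := by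
      rw [hrec k]; abel
    rw [hx1, norm_sub_sq_real]
    have h1 : (inner ℝ (x k - xstar) ((t k / ‖g k‖) • g k) : ℝ)
        = (t k / ‖g k‖) * (inner ℝ (g k) (x k - xstar) : ℝ) := by
      rw [real_inner_smul_right, real_inner_comm]
    have h2 : ‖(t k / ‖g k‖) • g k‖^2 = (t k)^2 := by
      rw [norm_smul]
      have hgk0 : ‖g k‖ ≠ 0 := ne_of_gt (hg k)
      rw [Real.norm_eq_abs, abs_div, abs_of_pos (ht k), abs_of_pos (hg k)]
      field_simp
    rw [h1, h2]; ring
  have hstep : ∀ k, ‖x (k+1) - xstar‖^2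
      ≤ ‖x k - xstar‖^2 - 2 * (t k / ‖g k‖) * (f (x k) - f xstar) + (t k)^2 := by
    intro k
    rw [hd k]
    have hs : 0 < t k / ‖g k‖ := div_pos (ht k) (hg k)
    nlinarith [hip k]
  have hmono : ∀ k, ‖x (k+1) - xstar‖^2 ≤ ‖x k - xstar‖^2 + (t k)^2 := by
    intro k
    have hs : 0 < t k / ‖g k‖ := div_pos (ht k) (hg k)
    nlinarith [hstep k, hfx k]
  set S := ∑' k, (t k)^2 with hSdef
  have hS0 : 0 ≤ S := tsum_nonneg (fun k => sq_nonneg _)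
  have hbound : ∀ k, ‖x k - xstar‖^2 ≤ ‖x 0 - xstar‖^2 + S := by
    have key : ∀ k, ‖x k - xstar‖^2 ≤ ‖x 0 - xstar‖^2 + ∑ i ∈ Finset.range k, (t i)^2 := by
      intro k
      induction k with
      | zero => simp
      | succ m ih =>
        rw [Finset.sum_range_succ]
        have := hmono m
        linarith
    intro k
    refine (key k).trans ?_
    have : ∑ i ∈ Finset.range k, (t i)^2 ≤ S :=
      Summable.sum_le_tsum _ (fun i _ => sq_nonneg _) ht2
    linarith
  set R := Real.sqrt (‖x 0 - xstar‖^2 + S) with hRdef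
  have hxk : ∀ k, ‖x k - xstar‖ ≤ R := fun k => Real.le_sqrt_of_sq_le (hbound k)
  -- f bounded above on a compact ball
  have hcont : ContinuousOn f (Metric.closedBall xstar (R+1)) :=
    (hf.continuousOn isOpen_univ).mono (Set.subset_univ _)
  obtain ⟨z, -, hz⟩ := (isCompact_closedBall xstar (R+1)).exists_isMaxOn
    ⟨xstar, Metric.mem_closedBall_self (by positivity)⟩ hcont
  set M := f z with hMdef
  have hxmem : ∀ k, x k ∈ Metric.closedBall xstar (R+1) := by
    intro k
    rw [Metric.mem_closedBall, dist_eq_norm]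
    have := hxk k
    linarith
  -- bound on subgradient norms
  have hgb : ∀ k, ‖g k‖ ≤ M - f xstar := by
    intro k
    set u := (‖g k‖⁻¹ : ℝ) • g k with hu
    have hun : ‖u‖ = 1 := by
      rw [hu, norm_smul, Real.norm_eq_abs, abs_inv, abs_of_pos (hg k)]
      exact inv_mul_cancel₀ (hg k).ne' 
    have hmem : x k + u ∈ Metric.closedBall xstar (R+1) := by
      rw [Metric.mem_closedBall, dist_eq_norm]
      have : x k + u - xstar = (x k - xstar) + u := by abel
      rw [this]
      calc ‖(x k - xstar) + u‖ ≤ ‖x k - xstar‖ + ‖u‖ := norm_add_le _ _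
        _ ≤ R + 1 := by rw [hun]; linarith [hxk k]
    have h1 := hgk k (x k + u)
    have h2 : (inner ℝ (g k) (x k + u - x k) : ℝ) = ‖g k‖ := by
      have : x k + u - x k = u := by abel
      rw [this, hu, real_inner_smul_right, real_inner_self_eq_norm_sq, sq, ← mul_assoc,
        inv_mul_cancel₀ (hg k).ne', one_mul]
    rw [h2] at h1
    have h3 : f (x k + u) ≤ M := hz hmem
    have h4 := hfx k
    linarith
  set L := M - f xstar with hLdef
  have hL : 0 < L := lt_of_lt_of_le (hg 0) (hgb 0)
  -- boundedness for liminf machinery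
  have hbddle : IsBoundedUnder (· ≤ ·) atTop (fun k => f (x k)) :=
    ⟨M, Filter.eventually_map.2 (Filter.Eventually.of_forall (fun k => hz (hxmem k)))⟩
  have hbddge : IsBoundedUnder (· ≥ ·) atTop (fun k => f (x k)) :=
    ⟨f xstar, Filter.eventually_map.2 (Filter.Eventually.of_forall hfx)⟩
  have hge : f xstar ≤ liminf (fun k => f (x k)) atTop :=
    le_liminf_of_le (hbddle.isCoboundedUnder_ge) (Filter.Eventually.of_forall hfx)
  by_contra hne
  have hlt : f xstar < liminf (fun k => f (x k)) atTop := lt_of_le_of_ne hge (Ne.symm hne)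
  obtain ⟨a, ha1, ha2⟩ := exists_between hlt
  have hev : ∀ᶠ k in atTop, a < f (x k) := eventually_lt_of_lt_liminf ha2 hbddge
  obtain ⟨N, hN⟩ := Filter.eventually_atTop.1 hev
  set ε := a - f xstar with hεdef
  have hε : 0 < ε := by simp [hεdef]; linarith
  have hstep2 : ∀ k, N ≤ k → ‖x (k+1) - xstar‖^2
      ≤ ‖x k - xstar‖^2 + (t k)^2 - 2 * t k * (ε / L) := by
    intro k hk
    have h1 := hstep k
    have h2 : ε ≤ f (x k) - f xstar := by have := hN k hk; simp [hεdef]; linarith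
    have h3 : ε / L ≤ (f (x k) - f xstar) / ‖g k‖ :=
      div_le_div₀ (by linarith) h2 (hg k) (hgb k)
    have h4 : t k * (ε / L) ≤ t k * ((f (x k) - f xstar) / ‖g k‖) :=
      mul_le_mul_of_nonneg_left h3 (ht k).le
    have h5 : t k * ((f (x k) - f xstar) / ‖g k‖) = (t k / ‖g k‖) * (f (x k) - f xstar) := by
      ring
    linarith [hstep k]
  -- telescoping sum
  have key : ∀ m : ℕ, ‖x (N+m) - xstar‖^2 + 2 * (ε/L) * ∑ k ∈ Finset.Ico N (N+m), t k
      ≤ ‖x N - xstar‖^2 + ∑ k ∈ Finset.Ico N (N+m), (t k)^2 := by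
    intro m
    induction m with
    | zero => simp
    | succ m ih =>
      have hNm : N ≤ N + m := Nat.le_add_right _ _
      have hsum1 : ∑ k ∈ Finset.Ico N (N+(m+1)), t k
          = (∑ k ∈ Finset.Ico N (N+m), t k) + t (N+m) := by
        rw [← Nat.add_assoc, Finset.sum_Ico_succ_top hNm]
      have hsum2 : ∑ k ∈ Finset.Ico N (N+(m+1)), (t k)^2
          = (∑ k ∈ Finset.Ico N (N+m), (t k)^2) + (t (N+m))^2 := by
        rw [← Nat.add_assoc, Finset.sum_Ico_succ_top hNm]
      have hs := hstep2 (N+m) hNm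
      rw [hsum1, hsum2, ← Nat.add_assoc]
      linarith
  have key2 : ∀ m : ℕ, 2 * (ε/L) * ∑ k ∈ Finset.Ico N (N+m), t k ≤ ‖x N - xstar‖^2 + S := by
    intro m
    have h1 := key m
    have h2 : ∑ k ∈ Finset.Ico N (N+m), (t k)^2 ≤ S :=
      Summable.sum_le_tsum _ (fun i _ => sq_nonneg _) ht2
    nlinarith [sq_nonneg (‖x (N+m) - xstar‖)]
  -- contradiction: t is summable
  have hεL : 0 < 2 * (ε / L) := by positivity
  set C : ℝ := (∑ k ∈ Finset.range N, t k) + (‖x N - xstar‖^2 + S) / (2 * (ε/L)) with hC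
  have hsummable : Summable t := by
    apply summable_of_sum_range_le (c := C) (fun k => (ht k).le)
    intro m
    have hC2 : 0 ≤ (‖x N - xstar‖^2 + S) / (2 * (ε/L)) := by positivity
    rcases le_or_gt m N with hm | hm
    · have : ∑ k ∈ Finset.range m, t k ≤ ∑ k ∈ Finset.range N, t k := by
        apply Finset.sum_le_sum_of_subset_of_nonneg
        · exact Finset.range_subset_range.2 hm
        · exact fun i _ _ => (ht i).le
      rw [hC]; linarith
    · have hNm : N ≤ m := hm.le
      have hsplit : ∑ k ∈ Finset.range m, t k
          = (∑ k ∈ Finset.range N, t k) + ∑ k ∈ Finset.Ico N m, t k := by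
        rw [Finset.range_eq_Ico, Finset.range_eq_Ico, Finset.sum_Ico_consecutive _ (Nat.zero_le N) hNm]
      have hIco : 2 * (ε/L) * ∑ k ∈ Finset.Ico N m, t k ≤ ‖x N - xstar‖^2 + S := by
        have := key2 (m - N)
        rwa [Nat.add_sub_cancel' hNm] at this
      have : ∑ k ∈ Finset.Ico N m, t k ≤ (‖x N - xstar‖^2 + S) / (2 * (ε/L)) := by
        rw [le_div_iff₀ hεL]; linarith
      rw [hsplit, hC]; linarith
  exact ht1 hsummable
end

section
/- Let f : ℝⁿ → ℝ be convex with a minimizer x*, and let (x_k) be generated by x_{k+1} = x_k − (t_k/‖g_k‖) g_k with g_k ∈ ∂f(x_k), g_k ≠ 0, t_k > 0, and Σ t_k² < ∞. Then the sequence (x_k) is bounded; in fact ‖x_k − x*‖² ≤ ‖x_0 − x*‖² + Σ_{ℓ=0}^{∞} t_ℓ² for all k. -/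
theorem normalized_subgradient_bounded {n : ℕ}
    (f : EuclideanSpace ℝ (Fin n) → ℝ) (hf : ConvexOn ℝ Set.univ f)
    (xstar : EuclideanSpace ℝ (Fin n)) (hmin : ∀ w, f xstar ≤ f w)
    (x g : ℕ → EuclideanSpace ℝ (Fin n)) (t : ℕ → ℝ)
    (ht : ∀ k, 0 < t k)
    (ht2 : Summable (fun k => (t k) ^ 2))
    (hgk : ∀ k w, f w ≥ f (x k) + (inner ℝ (g k) (w - x k) : ℝ))
    (hg0 : ∀ k, g k ≠ 0)
    (hrec : ∀ k, x (k + 1) = x k - (t k / ‖g k‖) • g k) :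
    ∀ k, ‖x k - xstar‖ ^ 2 ≤ ‖x 0 - xstar‖ ^ 2 + ∑' ℓ, (t ℓ) ^ 2 := by
  have step : ∀ k, ‖x (k+1) - xstar‖ ^ 2 ≤ ‖x k - xstar‖ ^ 2 + (t k) ^ 2 := by
    intro k
    have hgnorm : (0:ℝ) < ‖g k‖ := norm_pos_iff.mpr (hg0 k)
    have hinner : (0:ℝ) ≤ inner ℝ (g k) (x k - xstar) := by
      have h := hgk k xstar
      have h2 : (inner ℝ (g k) (xstar - x k) : ℝ) ≤ f xstar - f (x k) := by linarith
      have h3 : (inner ℝ (g k) (xstar - x k) : ℝ) = -(inner ℝ (g k) (x k - xstar) : ℝ) := by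
        rw [← inner_neg_right]; congr 1; abel
      have := hmin (x k)
      linarith [h3 ▸ h2]
    have hx : x (k+1) - xstar = (x k - xstar) - ((t k / ‖g k‖) • g k) := by
      rw [hrec k]; abel
    rw [hx, norm_sub_sq_real]
    have hsq : ‖(t k / ‖g k‖) • g k‖ ^ 2 = (t k) ^ 2 := by
      rw [norm_smul, Real.norm_eq_abs, abs_div, abs_norm,
        div_mul_cancel₀ _ (ne_of_gt hgnorm), sq_abs]
    have hip : (0:ℝ) ≤ inner ℝ (x k - xstar) ((t k / ‖g k‖) • g k) := by
      rw [real_inner_smul_right, real_inner_comm]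
      exact mul_nonneg (le_of_lt (div_pos (ht k) hgnorm)) hinner
    nlinarith
  intro k
  have hpos : ∀ ℓ, (0:ℝ) ≤ (t ℓ) ^ 2 := fun ℓ => sq_nonneg _
  have main : ‖x k - xstar‖ ^ 2 ≤ ‖x 0 - xstar‖ ^ 2 + ∑ ℓ ∈ Finset.range k, (t ℓ) ^ 2 := by
    induction k with
    | zero => simp
    | succ m ih =>
      rw [Finset.sum_range_succ]
      have := step m
      linarith
  have hsum : ∑ ℓ ∈ Finset.range k, (t ℓ) ^ 2 ≤ ∑' ℓ, (t ℓ) ^ 2 :=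
    Summable.sum_le_tsum _ (fun i _ => hpos i) ht2
  linarith
end

section
/- Let f : ℝⁿ → ℝ be convex with a minimizer x*, and let (x_k) be generated by the normalized subgradient method x_{k+1} = x_k − (t_k/‖g_k‖) g_k with g_k ∈ ∂f(x_k), g_k ≠ 0, and t_k > 0 satisfying Σ t_k = ∞ and Σ t_k² < ∞. Then (x_k) converges to some minimizer of f. -/
open Filter Topology

lemma quasiFejer {a e : ℕ → ℝ} (ha : ∀ k, 0 ≤ a k) (he : ∀ k, 0 ≤ e k)
    (hsum : Summable e) (hrec : ∀ k, a (k + 1) ≤ a k + e k) :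
    ∃ L, Tendsto a atTop (𝓝 L) := by
  set S : ℕ → ℝ := fun k => ∑' j, e (j + k) with hSdef
  have hSsum : ∀ k, Summable (fun j => e (j + k)) := fun k => (summable_nat_add_iff k).2 hsum
  have hstep : ∀ k, S k = e k + S (k + 1) := by
    intro k
    have h0 := Summable.tsum_eq_zero_add (hSsum k)
    simp only [zero_add] at h0
    rw [hSdef]
    simp only
    rw [h0]
    congr 1
    exact tsum_congr fun j => by ring_nf
  have hb : Antitone (fun k => a k + S k) := by
    apply antitone_nat_of_succ_le
    intro k
    have h1 := hrec k
    have h2 := hstep k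
    linarith
  have hbdd : BddBelow (Set.range (fun k => a k + S k)) := by
    refine ⟨0, ?_⟩
    rintro _ ⟨k, rfl⟩
    exact add_nonneg (ha k) (tsum_nonneg fun j => he _)
  have hbconv : Tendsto (fun k => a k + S k) atTop (𝓝 (⨅ k, a k + S k)) :=
    tendsto_atTop_ciInf hb hbdd
  have hS0 : Tendsto S atTop (𝓝 0) := by
    have heq : ∀ k, S k = (∑' j, e j) - ∑ j ∈ Finset.range k, e j := by
      intro k
      have := Summable.sum_add_tsum_nat_add k hsum
      simp only [hSdef]
      linarith
    have hps : Tendsto (fun k => ∑ j ∈ Finset.range k, e j) atTop (𝓝 (∑' j, e j)) :=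
      hsum.hasSum.tendsto_sum_nat
    have h2 : Tendsto (fun k => (∑' j, e j) - ∑ j ∈ Finset.range k, e j) atTop
        (𝓝 ((∑' j, e j) - (∑' j, e j))) := tendsto_const_nhds.sub hps
    rw [sub_self] at h2
    exact h2.congr fun k => (heq k).symm
  refine ⟨(⨅ k, a k + S k) - 0, ?_⟩
  have := hbconv.sub hS0
  exact this.congr fun k => by ring

lemma frequently_small {t c : ℕ → ℝ} (ht : ∀ k, 0 < t k) (ht1 : ¬ Summable t)
    (hsum : Summable (fun k => t k * c k)) :
    ∀ ε > 0, ∃ᶠ k in atTop, c k < ε := by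
  intro ε hε
  by_contra h
  rw [Filter.not_frequently] at h
  rw [eventually_atTop] at h
  obtain ⟨N, hN⟩ := h
  apply ht1
  rw [← summable_nat_add_iff N]
  refine Summable.of_nonneg_of_le (fun k => (ht _).le) (fun k => ?_)
    (((summable_nat_add_iff N).2 hsum).mul_left ε⁻¹)
  have h1 : ε ≤ c (k + N) := not_lt.1 (hN _ (Nat.le_add_left _ _))
  have h2 : t (k + N) * ε ≤ t (k + N) * c (k + N) :=
    mul_le_mul_of_nonneg_left h1 (ht _).le
  calc t (k + N) = ε⁻¹ * (t (k + N) * ε) := by field_simp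
    _ ≤ ε⁻¹ * (t (k + N) * c (k + N)) :=
        mul_le_mul_of_nonneg_left h2 (inv_nonneg.2 hε.le)

theorem normalized_subgradient_converges {n : ℕ}
    (f : EuclideanSpace ℝ (Fin n) → ℝ) (hf : ConvexOn ℝ Set.univ f)
    (xstar : EuclideanSpace ℝ (Fin n)) (hmin : ∀ w, f xstar ≤ f w)
    (x g : ℕ → EuclideanSpace ℝ (Fin n)) (t : ℕ → ℝ)
    (ht : ∀ k, 0 < t k)
    (ht1 : ¬ Summable t) (ht2 : Summable (fun k => (t k) ^ 2))
    (hgk : ∀ k w, f w ≥ f (x k) + (inner ℝ (g k) (w - x k) : ℝ))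
    (hg0 : ∀ k, g k ≠ 0)
    (hrec : ∀ k, x (k + 1) = x k - (t k / ‖g k‖) • g k) :
    ∃ y : EuclideanSpace ℝ (Fin n), (∀ w, f y ≤ f w) ∧ Tendsto x atTop (𝓝 y) := by
  have hgn : ∀ k, (0:ℝ) < ‖g k‖ := fun k => norm_pos_iff.2 (hg0 k)
  -- subgradient inequality rearranged
  have hsub : ∀ k z, f (x k) - f z ≤ (inner ℝ (g k) (x k - z) : ℝ) := by
    intro k z
    have h := hgk k z
    have h' : (inner ℝ (g k) (z - x k) : ℝ) = -(inner ℝ (g k) (x k - z) : ℝ) := by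
      rw [← inner_neg_right, neg_sub]
    rw [h'] at h
    linarith
  -- key identity
  have key : ∀ k z, ‖x (k + 1) - z‖ ^ 2
      = ‖x k - z‖ ^ 2 - 2 * (t k / ‖g k‖) * (inner ℝ (g k) (x k - z) : ℝ) + t k ^ 2 := by
    intro k z
    have hx : x (k + 1) - z = (x k - z) - (t k / ‖g k‖) • g k := by
      rw [hrec k]; abel
    rw [hx, norm_sub_sq_real, real_inner_smul_right, real_inner_comm, norm_smul]
    have h1 : ‖t k / ‖g k‖‖ = t k / ‖g k‖ := by
      rw [Real.norm_eq_abs, abs_of_pos (div_pos (ht k) (hgn k))]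
    rw [h1, mul_pow, div_pow]
    have h2 : ‖g k‖ ≠ 0 := (hgn k).ne'
    field_simp
  -- quasi-Fejér inequality for any minimizer
  have hquasi : ∀ z, (∀ w, f z ≤ f w) → ∀ k,
      ‖x (k + 1) - z‖ ^ 2 ≤ ‖x k - z‖ ^ 2 + t k ^ 2 := by
    intro z hz k
    have h1 := key k z
    have h2 : (0:ℝ) ≤ (inner ℝ (g k) (x k - z) : ℝ) :=
      le_trans (by linarith [hz (x k)]) (hsub k z)
    have h3 : (0:ℝ) ≤ t k / ‖g k‖ := (div_pos (ht k) (hgn k)).le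
    nlinarith
  -- continuity of f
  have hcont : Continuous f := by
    have := hf.continuousOn isOpen_univ
    rwa [continuousOn_univ] at this
  -- boundedness of the iterates
  set T : ℝ := ∑' k, t k ^ 2 with hT
  have hT0 : 0 ≤ T := tsum_nonneg fun k => sq_nonneg _
  have hpt : ∀ N, ∑ k ∈ Finset.range N, t k ^ 2 ≤ T :=
    fun N => Summable.sum_le_tsum _ (fun k _ => sq_nonneg _) ht2
  have hDbd : ∀ k, ‖x k - xstar‖ ^ 2 ≤ ‖x 0 - xstar‖ ^ 2 + T := by
    intro k
    have : ∀ k, ‖x k - xstar‖ ^ 2 ≤ ‖x 0 - xstar‖ ^ 2 + ∑ j ∈ Finset.range k, t j ^ 2 := by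
      intro k
      induction k with
      | zero => simp
      | succ m ih =>
        have := hquasi xstar hmin m
        rw [Finset.sum_range_succ]
        linarith
    linarith [this k, hpt k]
  set R : ℝ := Real.sqrt (‖x 0 - xstar‖ ^ 2 + T) with hR
  have hR0 : 0 ≤ R := Real.sqrt_nonneg _
  have hball : ∀ k, ‖x k - xstar‖ ≤ R := by
    intro k
    rw [hR]
    rw [show ‖x k - xstar‖ = Real.sqrt (‖x k - xstar‖ ^ 2) by
      rw [Real.sqrt_sq (norm_nonneg _)]]
    exact Real.sqrt_le_sqrt (hDbd k)
  -- bound on ‖g k‖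
  obtain ⟨zmax, hzmem, hzmax⟩ := (isCompact_closedBall xstar (R + 1)).exists_isMaxOn
    ⟨xstar, Metric.mem_closedBall_self (by linarith)⟩ (hcont.continuousOn)
  set G : ℝ := f zmax - f xstar with hG
  have hgbd : ∀ k, ‖g k‖ ≤ G := by
    intro k
    set u : EuclideanSpace ℝ (Fin n) := ‖g k‖⁻¹ • g k with hu
    have hun : ‖u‖ = 1 := by
      rw [hu, norm_smul, norm_inv, norm_norm, inv_mul_cancel₀ (hgn k).ne']
    have hinner : (inner ℝ (g k) u : ℝ) = ‖g k‖ := by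
      rw [hu, real_inner_smul_right, real_inner_self_eq_norm_sq]
      rw [pow_two, inv_mul_cancel_left₀ (hgn k).ne']
    have h1 := hgk k (x k + u)
    have h2 : x k + u - x k = u := by abel
    rw [h2, hinner] at h1
    have hmem : x k + u ∈ Metric.closedBall xstar (R + 1) := by
      rw [Metric.mem_closedBall, dist_eq_norm]
      calc ‖x k + u - xstar‖ = ‖(x k - xstar) + u‖ := by abel_nf
        _ ≤ ‖x k - xstar‖ + ‖u‖ := norm_add_le _ _
        _ ≤ R + 1 := by rw [hun]; linarith [hball k]
    have h3 : f (x k + u) ≤ f zmax := hzmax hmem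
    have h4 : f xstar ≤ f (x k) := hmin _
    rw [hG]
    linarith
  have hGpos : 0 < G := lt_of_lt_of_le (hgn 0) (hgbd 0)
  -- summability of t k * (f (x k) - f xstar)
  set c : ℕ → ℝ := fun k => f (x k) - f xstar with hcdef
  have hc0 : ∀ k, 0 ≤ c k := fun k => by simp [hcdef, hmin (x k)]
  set s : ℕ → ℝ := fun k => 2 * (t k / ‖g k‖) * (inner ℝ (g k) (x k - xstar) : ℝ) with hsdef
  have hs0 : ∀ k, 0 ≤ s k := by
    intro k
    have h2 : (0:ℝ) ≤ (inner ℝ (g k) (x k - xstar) : ℝ) :=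
      le_trans (by linarith [hmin (x k)]) (hsub k xstar)
    have h3 : (0:ℝ) ≤ t k / ‖g k‖ := (div_pos (ht k) (hgn k)).le
    positivity
  have htel : ∀ N, ∑ k ∈ Finset.range N, s k ≤ ‖x 0 - xstar‖ ^ 2 + T := by
    intro N
    have heq : ∀ N, ∑ k ∈ Finset.range N, s k
        = ‖x 0 - xstar‖ ^ 2 - ‖x N - xstar‖ ^ 2 + ∑ k ∈ Finset.range N, t k ^ 2 := by
      intro N
      induction N with
      | zero => simp
      | succ m ih =>
        rw [Finset.sum_range_succ, Finset.sum_range_succ, ih]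
        have := key m xstar
        simp only [hsdef]
        linarith
    have := heq N
    have h2 : (0:ℝ) ≤ ‖x N - xstar‖ ^ 2 := sq_nonneg _
    linarith [hpt N]
  have hterm : ∀ k, t k * c k ≤ (G / 2) * s k := by
    intro k
    have h1 : c k ≤ (inner ℝ (g k) (x k - xstar) : ℝ) := hsub k xstar
    have h2 : t k / G ≤ t k / ‖g k‖ :=
      div_le_div_of_nonneg_left (ht k).le (hgn k) (hgbd k)
    have h3 : (0:ℝ) ≤ (inner ℝ (g k) (x k - xstar) : ℝ) := le_trans (hc0 k) h1
    have h4 : t k * c k ≤ t k * (inner ℝ (g k) (x k - xstar) : ℝ) :=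
      mul_le_mul_of_nonneg_left h1 (ht k).le
    have h5 : t k * (inner ℝ (g k) (x k - xstar) : ℝ)
        ≤ (G * (t k / ‖g k‖)) * (inner ℝ (g k) (x k - xstar) : ℝ) := by
      apply mul_le_mul_of_nonneg_right _ h3
      calc t k = G * (t k / G) := by field_simp
        _ ≤ G * (t k / ‖g k‖) := mul_le_mul_of_nonneg_left h2 hGpos.le
    calc t k * c k ≤ (G * (t k / ‖g k‖)) * (inner ℝ (g k) (x k - xstar) : ℝ) :=
          le_trans h4 h5
      _ = (G / 2) * s k := by simp only [hsdef]; ring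
  have hsum : Summable (fun k => t k * c k) := by
    apply summable_of_sum_range_le (fun k => mul_nonneg (ht k).le (hc0 k))
    intro N
    calc ∑ k ∈ Finset.range N, t k * c k ≤ ∑ k ∈ Finset.range N, (G / 2) * s k :=
          Finset.sum_le_sum fun k _ => hterm k
      _ = (G / 2) * ∑ k ∈ Finset.range N, s k := by rw [Finset.mul_sum]
      _ ≤ (G / 2) * (‖x 0 - xstar‖ ^ 2 + T) :=
          mul_le_mul_of_nonneg_left (htel N) (by positivity)
  -- extract a subsequence along which c → 0
  have hfreq : ∀ m : ℕ, ∃ᶠ k in atTop, c k < 1 / (m + 1) :=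
    fun m => frequently_small ht ht1 hsum _ (by positivity)
  obtain ⟨φ, hφmono, hφ⟩ := Filter.extraction_forall_of_frequently hfreq
  -- extract a convergent sub-subsequence
  have hmem : ∀ m, x (φ m) ∈ Metric.closedBall xstar R := by
    intro m
    rw [Metric.mem_closedBall, dist_eq_norm]
    exact hball _
  obtain ⟨y, hymem, ψ, hψmono, hψlim⟩ :=
    (isCompact_closedBall xstar R).tendsto_subseq hmem
  -- f y = f xstar
  have hfy : f y = f xstar := by
    have hlim1 : Tendsto (fun m => f (x (φ (ψ m)))) atTop (𝓝 (f y)) :=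
      (hcont.tendsto y).comp hψlim
    have hlim2 : Tendsto (fun m => f (x (φ (ψ m)))) atTop (𝓝 (f xstar)) := by
      have hub : ∀ m, f (x (φ (ψ m))) ≤ f xstar + 1 / (ψ m + 1) := by
        intro m
        have := hφ (ψ m)
        simp only [hcdef] at this
        linarith
      have hlb : ∀ m, f xstar ≤ f (x (φ (ψ m))) := fun m => hmin _
      have htz : Tendsto (fun m => f xstar + 1 / ((ψ m : ℝ) + 1)) atTop
          (𝓝 (f xstar + 0)) := by
        apply tendsto_const_nhds.add
        exact tendsto_one_div_add_atTop_nhds_zero_nat.comp hψmono.tendsto_atTop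
      rw [add_zero] at htz
      exact tendsto_of_tendsto_of_tendsto_of_le_of_le
        (tendsto_const_nhds : Tendsto (fun _ : ℕ => f xstar) atTop (𝓝 (f xstar)))
        htz hlb hub
    exact tendsto_nhds_unique hlim1 hlim2
  have hymin : ∀ w, f y ≤ f w := fun w => hfy ▸ hmin w
  -- ‖x k - y‖² converges, and a subsequence tends to 0, hence to 0
  obtain ⟨L, hL⟩ := quasiFejer (fun k => sq_nonneg ‖x k - y‖) (fun k => sq_nonneg (t k))
    ht2 (hquasi y hymin)
  have hsubseq : Tendsto (fun m => ‖x (φ (ψ m)) - y‖ ^ 2) atTop (𝓝 0) := by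
    have h1 : Tendsto (fun m => x (φ (ψ m)) - y) atTop (𝓝 (y - y)) :=
      hψlim.sub tendsto_const_nhds
    rw [sub_self] at h1
    have h2 : Tendsto (fun m => ‖x (φ (ψ m)) - y‖) atTop (𝓝 0) := by
      simpa using h1.norm
    have := h2.pow 2
    simpa using this
  have hL0 : L = 0 := by
    have h1 : Tendsto (fun m => ‖x (φ (ψ m)) - y‖ ^ 2) atTop (𝓝 L) :=
      hL.comp (hφmono.comp hψmono).tendsto_atTop
    exact tendsto_nhds_unique h1 hsubseq
  rw [hL0] at hL
  refine ⟨y, hymin, ?_⟩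
  rw [tendsto_iff_norm_sub_tendsto_zero]
  have h2 : Tendsto (fun k => Real.sqrt (‖x k - y‖ ^ 2)) atTop (𝓝 (Real.sqrt 0)) :=
    (Real.continuous_sqrt.tendsto 0).comp hL
  rw [Real.sqrt_zero] at h2
  exact h2.congr fun k => Real.sqrt_sq (norm_nonneg _)
end
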